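/- Let h : ℝ^p → ℝ^n be Lebesgue measurable, let Y ⊆ ℝ^p be open, and suppose h restricted to Y is essentially bounded. Then for every y ∈ Y the ess-im accumulation set A(h; y) is nonempty and compact, and h(y) ∈ A(h; y) for almost every y ∈ Y. -/
import Mathlib


open MeasureTheory Set Matrix

noncomputable section

/-- The essential image of `h` restricted to `Y`: the set of `z` every neighborhood of
which has preimage of positive measure inside `Y`. -/
def essimOn {α : Type*} [MeasureSpace α] {n : ℕ}
    (h : α → (Fin n → ℝ)) (Y : Set α) : Set (Fin n → ℝ) :=
  {z | ∀ V : Set (Fin n → ℝ), IsOpen V → z ∈ V → 0 < volume (h ⁻¹' V ∩ Y)}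

/-- Left ess-im accumulation set of `v` at `ξ`. -/
def AessL {n : ℕ} (v : ℝ → (Fin n → ℝ)) (ξ : ℝ) : Set (Fin n → ℝ) :=
  ⋂ r > (0:ℝ), essimOn v (Set.Ioo (ξ - r) ξ)

/-- Right ess-im accumulation set of `v` at `ξ`. -/
def AessR {n : ℕ} (v : ℝ → (Fin n → ℝ)) (ξ : ℝ) : Set (Fin n → ℝ) :=
  ⋂ r > (0:ℝ), essimOn v (Set.Ioo ξ (ξ + r))

/-- Two-sided ess-im accumulation set of `v` at `ξ`. -/
def Aess {n : ℕ} (v : ℝ → (Fin n → ℝ)) (ξ : ℝ) : Set (Fin n → ℝ) :=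
  ⋂ r > (0:ℝ), essimOn v (Set.Ioo (ξ - r) (ξ + r))

/-- `ξ` is an ess-im continuity point of `v`. -/
def EssImContPt {n : ℕ} (v : ℝ → (Fin n → ℝ)) (ξ : ℝ) : Prop :=
  ∃ z : Fin n → ℝ, AessL v ξ = {z} ∧ AessR v ξ = {z}

/-- Strictly hyperbolic region: states `u ∈ U` where `A(u) = Df(u)` has `n` distinct
real eigenvalues. -/
def USH {n : ℕ} (f : (Fin n → ℝ) → (Fin n → ℝ)) (U : Set (Fin n → ℝ)) :
    Set (Fin n → ℝ) :=
  {u | u ∈ U ∧ ∃ lam : Fin n → ℝ, Function.Injective lam ∧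
    ∀ i, Module.End.HasEigenvalue
      ((fderiv ℝ f u).toLinearMap : Module.End ℝ (Fin n → ℝ)) (lam i)}

/-- A reduced state function: essentially bounded measurable `v : ℝ → ℝⁿ` with
essential image contained in the strictly hyperbolic region. -/
def IsReducedState {n : ℕ} (f : (Fin n → ℝ) → (Fin n → ℝ)) (U : Set (Fin n → ℝ))
    (v : ℝ → (Fin n → ℝ)) : Prop :=
  Measurable v ∧ (∃ C : ℝ, ∀ᵐ ξ : ℝ ∂volume, ‖v ξ‖ ≤ C) ∧
    essimOn v Set.univ ⊆ USH f U

/-- `v` is a self-similar weak solution of `u_t + f(u)_x = 0`. -/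
def IsSSWeakSol {n : ℕ} (f : (Fin n → ℝ) → (Fin n → ℝ)) (v : ℝ → (Fin n → ℝ)) : Prop :=
  ∀ ψ : ℝ → (Fin n → ℝ), ContDiff ℝ 1 ψ → HasCompactSupport ψ →
    ∫ ξ : ℝ, ((deriv ψ ξ) ⬝ᵥ ((-ξ) • v ξ + f (v ξ)) - (ψ ξ) ⬝ᵥ (v ξ)) = 0

/-- `det (−ξ I + Df(u))`. -/
def detShift {n : ℕ} (f : (Fin n → ℝ) → (Fin n → ℝ)) (ξ : ℝ) (u : Fin n → ℝ) : ℝ :=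
  LinearMap.det (-(ξ • (LinearMap.id : (Fin n → ℝ) →ₗ[ℝ] (Fin n → ℝ)))
    + (fderiv ℝ f u).toLinearMap)

/-- The averaged matrix `M(u⁻, ξ, u⁺) = −ξ I + ∫₀¹ Df((1−τ)u⁻ + τu⁺) dτ`. -/
def Mmat {n : ℕ} (f : (Fin n → ℝ) → (Fin n → ℝ)) (um : Fin n → ℝ) (ξ : ℝ)
    (up : Fin n → ℝ) : (Fin n → ℝ) →L[ℝ] (Fin n → ℝ) :=
  -(ξ • (1 : (Fin n → ℝ) →L[ℝ] (Fin n → ℝ))) +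
    ∫ τ in (0:ℝ)..(1:ℝ), fderiv ℝ f ((1 - τ) • um + τ • up)


/-- The ess-im accumulation set of `h : ℝ^p → ℝ^n` at a point `y`. -/
def AessP {p n : ℕ} (h : (Fin p → ℝ) → (Fin n → ℝ)) (y : Fin p → ℝ) :
    Set (Fin n → ℝ) :=
  ⋂ r > (0:ℝ), essimOn h (Metric.ball y r)


section AuxEssim

lemma aux_essimOn_mono {p n : ℕ} (h : (Fin p → ℝ) → (Fin n → ℝ)) {S T : Set (Fin p → ℝ)}
    (hST : S ⊆ T) : essimOn h S ⊆ essimOn h T := fun z hz V hV hzV =>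
  lt_of_lt_of_le (hz V hV hzV) (measure_mono (Set.inter_subset_inter_right _ hST))

lemma aux_isClosed_essimOn {p n : ℕ} (h : (Fin p → ℝ) → (Fin n → ℝ)) (S : Set (Fin p → ℝ)) :
    IsClosed (essimOn h S) := by
  rw [← isOpen_compl_iff, isOpen_iff_mem_nhds]
  intro z hz
  simp only [Set.mem_compl_iff, essimOn, Set.mem_setOf_eq, not_forall] at hz
  obtain ⟨V, hVopen, hzV, hpos⟩ := hz
  refine Filter.mem_of_superset (hVopen.mem_nhds hzV) ?_
  intro w hw
  simp only [Set.mem_compl_iff, essimOn, Set.mem_setOf_eq, not_forall]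
  exact ⟨V, hVopen, hw, hpos⟩

lemma aux_essimOn_subset_closedBall {p n : ℕ} (h : (Fin p → ℝ) → (Fin n → ℝ))
    {Y : Set (Fin p → ℝ)} {C : ℝ} (h0 : volume ({x | ¬ ‖h x‖ ≤ C} ∩ Y) = 0)
    {S : Set (Fin p → ℝ)} (hSY : S ⊆ Y) :
    essimOn h S ⊆ Metric.closedBall 0 (max C 0) := by
  intro z hz
  by_contra hzc
  rw [mem_closedBall_zero_iff, not_le] at hzc
  have hV : IsOpen {w : Fin n → ℝ | max C 0 < ‖w‖} :=
    isOpen_lt continuous_const continuous_norm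
  have hpos := hz _ hV hzc
  have hnull : volume (h ⁻¹' {w | max C 0 < ‖w‖} ∩ S) = 0 := by
    refine measure_mono_null ?_ h0
    rintro x ⟨hx1, hx2⟩
    exact ⟨not_le.mpr (lt_of_le_of_lt (le_max_left C 0) hx1), hSY hx2⟩
  exact absurd hnull hpos.ne'

lemma aux_essimOn_ball_nonempty {p n : ℕ} (h : (Fin p → ℝ) → (Fin n → ℝ))
    {Y : Set (Fin p → ℝ)} {C : ℝ} (h0 : volume ({x | ¬ ‖h x‖ ≤ C} ∩ Y) = 0)
    {y : Fin p → ℝ} {s : ℝ} (hs : 0 < s) (hsY : Metric.ball y s ⊆ Y) :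
    (essimOn h (Metric.ball y s)).Nonempty := by
  by_contra hemp
  rw [Set.not_nonempty_iff_eq_empty] at hemp
  have hch : ∀ z : Fin n → ℝ, ∃ V : Set (Fin n → ℝ),
      IsOpen V ∧ z ∈ V ∧ volume (h ⁻¹' V ∩ Metric.ball y s) = 0 := by
    intro z
    have hz : z ∉ essimOn h (Metric.ball y s) := by simp [hemp]
    simp only [essimOn, Set.mem_setOf_eq, not_forall] at hz
    obtain ⟨V, hVo, hzV, hpos⟩ := hz
    refine ⟨V, hVo, hzV, ?_⟩
    simpa [pos_iff_ne_zero, not_not] using hpos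
  choose V hVo hVm hVn using hch
  obtain ⟨t, ht⟩ := (isCompact_closedBall (0 : Fin n → ℝ) (max C 0)).elim_finite_subcover
    V hVo (fun z _ => Set.mem_iUnion.mpr ⟨z, hVm z⟩)
  have h1 : volume (h ⁻¹' (⋃ z ∈ t, V z) ∩ Metric.ball y s) = 0 := by
    have heq : h ⁻¹' (⋃ z ∈ t, V z) ∩ Metric.ball y s
        = ⋃ z ∈ t, (h ⁻¹' V z ∩ Metric.ball y s) := by
      simp [Set.preimage_iUnion, Set.iUnion_inter]
    rw [heq]
    exact (measure_biUnion_null_iff t.countable_toSet).mpr fun z _ => hVn z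
  have hcover : Metric.ball y s ⊆
      (h ⁻¹' (⋃ z ∈ t, V z) ∩ Metric.ball y s) ∪ ({x | ¬ ‖h x‖ ≤ C} ∩ Y) := by
    intro x hx
    by_cases hxc : ‖h x‖ ≤ C
    · left
      refine ⟨ht ?_, hx⟩
      rw [mem_closedBall_zero_iff]
      exact le_trans hxc (le_max_left _ _)
    · right; exact ⟨hxc, hsY hx⟩
  have hz0 := measure_mono_null hcover (measure_union_null h1 h0)
  exact absurd hz0 (Metric.measure_ball_pos volume y hs).ne'

end AuxEssim

/-- For measurable `h : ℝ^p → ℝ^n` essentially bounded on an open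
set `Y`, the ess-im accumulation set `A(h; y)` is nonempty and compact for every
`y ∈ Y`, and `h(y) ∈ A(h; y)` for a.e. `y ∈ Y`. -/
theorem aess_nonempty_compact_and_ae_mem
    {p n : ℕ} (h : (Fin p → ℝ) → (Fin n → ℝ)) (hmeas : Measurable h)
    (Y : Set (Fin p → ℝ)) (hYopen : IsOpen Y)
    (hbd : ∃ C : ℝ, ∀ᵐ y ∂(volume.restrict Y), ‖h y‖ ≤ C) :
    (∀ y ∈ Y, (AessP h y).Nonempty ∧ IsCompact (AessP h y)) ∧
      ∀ᵐ y ∂(volume.restrict Y), h y ∈ AessP h y := by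
  obtain ⟨C, hC⟩ := hbd
  have h0 : volume ({x | ¬ ‖h x‖ ≤ C} ∩ Y) = 0 := by
    have h1 := ae_iff.mp hC
    have hm : MeasurableSet {a : Fin p → ℝ | ¬‖h a‖ ≤ C} :=
      (measurableSet_le hmeas.norm measurable_const).compl
    rwa [Measure.restrict_apply hm] at h1
  constructor
  · intro y hy
    obtain ⟨r0, hr0, hball⟩ := Metric.isOpen_iff.mp hYopen y hy
    have hAsub : AessP h y ⊆ essimOn h (Metric.ball y r0) := fun z hz => by
      simp only [AessP, Set.mem_iInter] at hz
      exact hz r0 hr0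
    have hAclosed : IsClosed (AessP h y) :=
      isClosed_iInter fun r => isClosed_iInter fun _ => aux_isClosed_essimOn h _
    have hAcompact : IsCompact (AessP h y) :=
      (isCompact_closedBall (0 : Fin n → ℝ) (max C 0)).of_isClosed_subset hAclosed
        (hAsub.trans (aux_essimOn_subset_closedBall h h0 hball))
    refine ⟨?_, hAcompact⟩
    -- nonemptiness via a decreasing sequence of nonempty compact sets
    set Z : ℕ → Set (Fin n → ℝ) := fun k => essimOn h (Metric.ball y (r0 / (k + 1)))
    have hZle : ∀ k : ℕ, r0 / ((k : ℝ) + 1) ≤ r0 := fun k => by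
      rw [div_le_iff₀ (by positivity)]
      nlinarith [hr0.le]
    have hZY : ∀ k : ℕ, Metric.ball y (r0 / (k + 1)) ⊆ Y := fun k =>
      (Metric.ball_subset_ball (hZle k)).trans hball
    have hZne : ∀ k : ℕ, (Z k).Nonempty := fun k =>
      aux_essimOn_ball_nonempty h h0 (by positivity) (hZY k)
    have hZdec : ∀ k : ℕ, Z (k + 1) ⊆ Z k := fun k => by
      refine aux_essimOn_mono h (Metric.ball_subset_ball ?_)
      have h1 : (0:ℝ) < (k:ℝ) + 1 := by positivity
      have h2 : ((k:ℝ) + 1) ≤ ((k:ℝ) + 1 + 1) := by linarith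
      push_cast
      gcongr
    have hZcl : ∀ k : ℕ, IsClosed (Z k) := fun k => aux_isClosed_essimOn h _
    have hZ0 : IsCompact (Z 0) :=
      (isCompact_closedBall (0 : Fin n → ℝ) (max C 0)).of_isClosed_subset (hZcl 0)
        (aux_essimOn_subset_closedBall h h0 (hZY 0))
    obtain ⟨z, hzZ⟩ := IsCompact.nonempty_iInter_of_sequence_nonempty_isCompact_isClosed
      Z hZdec hZne hZ0 hZcl
    refine ⟨z, ?_⟩
    simp only [AessP, Set.mem_iInter]
    intro r hr
    obtain ⟨k, hk⟩ := exists_nat_gt (r0 / r)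
    have hk' : r0 / ((k : ℝ) + 1) < r := by
      rw [div_lt_iff₀ (by positivity)]
      have h1 : r0 < (k : ℝ) * r := (div_lt_iff₀ hr).mp hk
      nlinarith [hr]
    have := Set.mem_iInter.mp hzZ k
    exact aux_essimOn_mono h (Metric.ball_subset_ball hk'.le) this
  · -- a.e. part, via Lebesgue density points
    obtain ⟨B, hBc, -, hBb⟩ := TopologicalSpace.exists_countable_basis (Fin n → ℝ)
    have key : ∀ᵐ y ∂(volume : Measure (Fin p → ℝ)), ∀ t ∈ B, y ∈ h ⁻¹' t →
        Filter.Tendsto (fun r => volume (h ⁻¹' t ∩ Metric.closedBall y r) /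
          volume (Metric.closedBall y r)) (nhdsWithin 0 (Set.Ioi 0)) (nhds 1) := by
      rw [ae_ball_iff hBc]
      intro t ht
      have hmt : MeasurableSet (h ⁻¹' t) := hmeas (hBb.isOpen ht).measurableSet
      filter_upwards [Besicovitch.ae_tendsto_measure_inter_div_of_measurableSet volume hmt]
        with y hy hyt
      simpa [Set.indicator_of_mem hyt] using hy
    filter_upwards [ae_restrict_of_ae key] with y hy
    simp only [AessP, Set.mem_iInter]
    intro r hr V hVopen hV
    obtain ⟨t, htB, hyt, htV⟩ := hBb.exists_subset_of_mem_open hV hVopen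
    have hdens := hy t htB hyt
    have hev : ∀ᶠ r' in nhdsWithin (0:ℝ) (Set.Ioi 0),
        (1:ENNReal) / 2 < volume (h ⁻¹' t ∩ Metric.closedBall y r') /
          volume (Metric.closedBall y r') :=
      hdens.eventually (eventually_gt_nhds (by norm_num))
    have hev2 : Set.Ioo (0:ℝ) r ∈ nhdsWithin (0:ℝ) (Set.Ioi 0) :=
      Ioo_mem_nhdsGT_of_mem (by constructor <;> simp [hr, le_refl])
    obtain ⟨r', hr'1, hr'2⟩ := (hev.and (Filter.eventually_mem_set.mpr hev2)).exists
    have hnum : 0 < volume (h ⁻¹' t ∩ Metric.closedBall y r') := by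
      rcases eq_or_ne (volume (h ⁻¹' t ∩ Metric.closedBall y r')) 0 with h' | h'
      · rw [h', ENNReal.zero_div] at hr'1
        simp at hr'1
      · exact pos_iff_ne_zero.mpr h'
    refine lt_of_lt_of_le hnum (measure_mono ?_)
    intro x hx
    exact ⟨htV hx.1, lt_of_le_of_lt (Metric.mem_closedBall.mp hx.2) hr'2.2⟩


end
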